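/- Let $b \in BMO(\mathbb{R}^n)$, $1 < q < \infty$, and let $\mu$ be a weight in $RH_r$ for some $r > 1$. Then there is a constant $C$ (depending on $n$, $q$, $r$, and the $RH_r$ constant of $\mu$) such that for every ball $B$, $\big(\frac{1}{\mu(B)} \int_B |b(x) - b_B|^q \mu(x)\,dx\big)^{1/q} \le C \|b\|_*$. -/

import Mathlib

open MeasureTheory Metric Set
open scoped ENNReal NNReal

noncomputable section

abbrev Rn (n : ℕ) := EuclideanSpace ℝ (Fin n)

/-- The integral of an `ℝ≥0∞`-valued weight over a ball: `w(B(z,r))`. -/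
def wInt {n : ℕ} (w : Rn n → ℝ≥0∞) (z : Rn n) (r : ℝ) : ℝ≥0∞ :=
  ∫⁻ x in ball z r, w x

/-- The `L^s` norm of `Ω` on the unit sphere `S^{n-1}`, with respect to surface measure. -/
def sphereNorm (n : ℕ) (s : ℝ≥0∞) (Ω : Rn n → ℝ) : ℝ≥0∞ :=
  eLpNorm (fun y : sphere (0 : Rn n) 1 => Ω (y : Rn n)) s
    ((volume : Measure (Rn n)).toSphere)

/-- `Ω` is homogeneous of degree zero. -/
def HomZero {n : ℕ} (Ω : Rn n → ℝ) : Prop :=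
  ∀ c : ℝ, 0 < c → ∀ y, Ω (c • y) = Ω y

/-- Rough fractional maximal operator `M_{Ω,α}`. -/
def roughFracMax {n : ℕ} (α : ℝ) (Ω f : Rn n → ℝ) (x : Rn n) : ℝ≥0∞ :=
  ⨆ (r : ℝ) (_ : 0 < r),
    ENNReal.ofReal (r ^ (α - n)) *
      ∫⁻ y in {y : Rn n | ‖y‖ ≤ r}, (‖Ω (‖y‖⁻¹ • y)‖₊ : ℝ≥0∞) * (‖f (x - y)‖₊ : ℝ≥0∞)

/-- Fractional maximal operator `M_{α,s}` (with `M_α = M_{α,1}`). -/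
def fracMax {n : ℕ} (α s : ℝ) (f : Rn n → ℝ) (x : Rn n) : ℝ≥0∞ :=
  ⨆ (z : Rn n) (r : ℝ) (_ : 0 < r) (_ : x ∈ ball z r),
    (volume (ball z r) ^ (α * s / n - 1) *
      ∫⁻ y in ball z r, (‖f y‖₊ : ℝ≥0∞) ^ s) ^ (1 / s)

/-- Rough fractional integral operator `T_{Ω,α}`. -/
def roughFracInt {n : ℕ} (α : ℝ) (Ω f : Rn n → ℝ) (x : Rn n) : ℝ :=
  ∫ y, (Ω (‖x - y‖⁻¹ • (x - y)) / ‖x - y‖ ^ ((n : ℝ) - α)) * f y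

/-- Commutator `[b, T_{Ω,α}]`. -/
def commT {n : ℕ} (b : Rn n → ℝ) (α : ℝ) (Ω f : Rn n → ℝ) (x : Rn n) : ℝ :=
  ∫ y, (Ω (‖x - y‖⁻¹ • (x - y)) / ‖x - y‖ ^ ((n : ℝ) - α)) * (b x - b y) * f y

/-- Commutator of the rough fractional maximal operator, `[b, M_{Ω,α}]`. -/
def commMax {n : ℕ} (b : Rn n → ℝ) (α : ℝ) (Ω f : Rn n → ℝ) (x : Rn n) : ℝ≥0∞ :=
  ⨆ (r : ℝ) (_ : 0 < r),
    ENNReal.ofReal (r ^ (α - n)) *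
      ∫⁻ y in {y : Rn n | ‖y - x‖ ≤ r},
        (‖b x - b y‖₊ : ℝ≥0∞) * (‖Ω (x - y)‖₊ : ℝ≥0∞) * (‖f y‖₊ : ℝ≥0∞)

/-- Two-weight Morrey norm `‖f‖_{L^{p,κ}(u,v)}`. -/
def morreyNorm {n : ℕ} (p κ : ℝ) (u v : Rn n → ℝ≥0∞) (f : Rn n → ℝ) : ℝ≥0∞ :=
  ⨆ (z : Rn n) (r : ℝ) (_ : 0 < r),
    ((wInt v z r) ^ (-κ) * ∫⁻ x in ball z r, (‖f x‖₊ : ℝ≥0∞) ^ p * u x) ^ (1 / p)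

/-- Morrey norm of an `ℝ≥0∞`-valued function with one weight. -/
def morreyNormE {n : ℕ} (p κ : ℝ) (v : Rn n → ℝ≥0∞) (g : Rn n → ℝ≥0∞) : ℝ≥0∞ :=
  ⨆ (z : Rn n) (r : ℝ) (_ : 0 < r),
    ((wInt v z r) ^ (-κ) * ∫⁻ x in ball z r, g x ^ p * v x) ^ (1 / p)

/-- Average of `b` over the ball `B(z,r)`. -/
def bmoAvg {n : ℕ} (b : Rn n → ℝ) (z : Rn n) (r : ℝ) : ℝ :=
  ⨍ x in ball z r, b x

/-- BMO norm `‖b‖_*`. -/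
def bmoNorm {n : ℕ} (b : Rn n → ℝ) : ℝ≥0∞ :=
  ⨆ (z : Rn n) (r : ℝ) (_ : 0 < r),
    (∫⁻ x in ball z r, (‖b x - bmoAvg b z r‖₊ : ℝ≥0∞)) / volume (ball z r)

/-- The Muckenhoupt `A_p` condition (`1 < p`) with constant `C`. -/
def IsAp {n : ℕ} (p : ℝ) (C : ℝ≥0∞) (w : Rn n → ℝ≥0∞) : Prop :=
  ∀ (z : Rn n) (r : ℝ), 0 < r →
    ((∫⁻ x in ball z r, w x) / volume (ball z r)) *
      ((∫⁻ x in ball z r, w x ^ (-(1 / (p - 1)))) / volume (ball z r)) ^ (p - 1) ≤ C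

/-- The Muckenhoupt `A_1` condition with constant `C`. -/
def IsA1 {n : ℕ} (C : ℝ≥0∞) (w : Rn n → ℝ≥0∞) : Prop :=
  ∀ (z : Rn n) (r : ℝ), 0 < r →
    ∫⁻ x in ball z r, w x ≤ C * volume (ball z r) * essInf w (volume.restrict (ball z r))

/-- The Muckenhoupt–Wheeden `A(p,q)` condition with constant `C`. -/
def IsApq {n : ℕ} (p q : ℝ) (C : ℝ≥0∞) (w : Rn n → ℝ≥0∞) : Prop :=
  ∀ (z : Rn n) (r : ℝ), 0 < r →
    ((∫⁻ x in ball z r, w x ^ q) / volume (ball z r)) ^ (1 / q) *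
      ((∫⁻ x in ball z r, w x ^ (-(p / (p - 1)))) / volume (ball z r)) ^ (1 - 1 / p) ≤ C

/-- The reverse Hölder condition `RH_r` with constant `C`. -/
def IsRH {n : ℕ} (r : ℝ) (C : ℝ≥0∞) (w : Rn n → ℝ≥0∞) : Prop :=
  ∀ (z : Rn n) (ρ : ℝ), 0 < ρ →
    ((∫⁻ x in ball z ρ, w x ^ r) / volume (ball z ρ)) ^ (1 / r) ≤
      C * ((∫⁻ x in ball z ρ, w x) / volume (ball z ρ))

def MemAp {n : ℕ} (p : ℝ) (w : Rn n → ℝ≥0∞) : Prop := ∃ C : ℝ≥0∞, C ≠ ⊤ ∧ IsAp p C w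
def MemA1 {n : ℕ} (w : Rn n → ℝ≥0∞) : Prop := ∃ C : ℝ≥0∞, C ≠ ⊤ ∧ IsA1 C w
def MemApq {n : ℕ} (p q : ℝ) (w : Rn n → ℝ≥0∞) : Prop := ∃ C : ℝ≥0∞, C ≠ ⊤ ∧ IsApq p q C w
def MemRH {n : ℕ} (r : ℝ) (w : Rn n → ℝ≥0∞) : Prop := ∃ C : ℝ≥0∞, C ≠ ⊤ ∧ IsRH r C w
open Filter
open scoped Topology

theorem Real.ennnorm_eq_ofReal_abs (r : ℝ) : (‖r‖₊ : ℝ≥0∞) = ENNReal.ofReal |r| :=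
  Real.enorm_eq_ofReal_abs r

theorem MeasureTheory.ofReal_integral_norm_eq_lintegral_nnnorm {α : Type*} [MeasurableSpace α]
    {μ : Measure α} {f : α → ℝ} (hf : Integrable f μ) :
    ENNReal.ofReal (∫ x, ‖f x‖ ∂μ) = ∫⁻ x, (‖f x‖₊ : ℝ≥0∞) ∂μ :=
  ofReal_integral_norm_eq_lintegral_enorm hf

namespace JN
variable {n : ℕ}

/-- `∫⁻_s ‖b - c‖` -/
def J (b : Rn n → ℝ) (s : Set (Rn n)) (c : ℝ) : ℝ≥0∞ := ∫⁻ x in s, (‖b x - c‖₊ : ℝ≥0∞)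

lemma vol_pos (x : Rn n) {t : ℝ} (ht : 0 < t) : volume (ball x t) ≠ 0 :=
  (measure_ball_pos volume x ht).ne'

lemma vol_ne_top (x : Rn n) (t : ℝ) : volume (ball x t) ≠ ⊤ := measure_ball_lt_top.ne

lemma vol_scale (hn : 0 < n) (x y : Rn n) {a t s : ℝ} (ha : 0 ≤ a) (ht : 0 ≤ t)
    (hs : a * t ≤ s) (hst : 0 ≤ s):
    volume (ball x s) ≥ ENNReal.ofReal (a ^ n) * volume (ball y t) := by
  haveI : Nonempty (Fin n) := Fin.pos_iff_nonempty.mp hn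
  rw [Measure.addHaar_ball volume x hst, Measure.addHaar_ball volume y ht,
    finrank_euclideanSpace_fin, ← mul_assoc, ← ENNReal.ofReal_mul (by positivity), ← mul_pow]
  exact mul_le_mul_left (ENNReal.ofReal_le_ofReal (pow_le_pow_left₀ (by positivity) hs n)) _

lemma vol_scale_eq (hn : 0 < n) (x y : Rn n) {a t : ℝ} (ha : 0 ≤ a) (ht : 0 ≤ t) :
    volume (ball x (a * t)) = ENNReal.ofReal (a ^ n) * volume (ball y t) := by
  haveI : Nonempty (Fin n) := Fin.pos_iff_nonempty.mp hn
  rw [Measure.addHaar_ball volume x (by positivity), Measure.addHaar_ball volume y ht,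
    finrank_euclideanSpace_fin, ← mul_assoc, ← ENNReal.ofReal_mul (by positivity), ← mul_pow]

lemma J_mono {b : Rn n → ℝ} {s s' : Set (Rn n)} (h : s ⊆ s') (c : ℝ) :
    J b s c ≤ J b s' c := lintegral_mono_set h

lemma J_triangle (b : Rn n → ℝ) (s : Set (Rn n)) (c c' : ℝ) :
    J b s c ≤ J b s c' + ENNReal.ofReal |c' - c| * volume s := by
  have : ∀ x, (‖b x - c‖₊ : ℝ≥0∞) ≤ (‖b x - c'‖₊ : ℝ≥0∞) + ENNReal.ofReal |c' - c| := by
    intro x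
    rw [← Real.ennnorm_eq_ofReal_abs, ← ENNReal.coe_add]
    norm_cast
    calc ‖b x - c‖₊ = ‖(b x - c') + (c' - c)‖₊ := by ring_nf
    _ ≤ ‖b x - c'‖₊ + ‖c' - c‖₊ := nnnorm_add_le _ _
  calc J b s c ≤ ∫⁻ x in s, ((‖b x - c'‖₊ : ℝ≥0∞) + ENNReal.ofReal |c' - c|) :=
        lintegral_mono this
  _ = J b s c' + ENNReal.ofReal |c' - c| * volume s := by
      rw [lintegral_add_right _ measurable_const, J, setLIntegral_const]

lemma bmo_ball {b : Rn n → ℝ} (z : Rn n) {ρ : ℝ} (hρ : 0 < ρ) :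
    J b (ball z ρ) (bmoAvg b z ρ) ≤ bmoNorm b * volume (ball z ρ) := by
  have h : J b (ball z ρ) (bmoAvg b z ρ) / volume (ball z ρ) ≤ bmoNorm b := by
    refine le_trans ?_ (le_iSup _ z)
    refine le_trans ?_ (le_iSup _ ρ)
    exact le_trans (le_of_eq rfl) (le_iSup (fun _ : 0 < ρ => _) hρ)
  rwa [ENNReal.div_le_iff (vol_pos z hρ) (vol_ne_top z ρ)] at h

lemma sphere_null (hn : 0 < n) (x : Rn n) (t : ℝ) : volume (sphere x t) = 0 := by
  haveI : Nonempty (Fin n) := Fin.pos_iff_nonempty.mp hn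
  exact Measure.addHaar_sphere volume x t

lemma lint_closedBall (hn : 0 < n) (f : Rn n → ℝ≥0∞) (x : Rn n) (t : ℝ) :
    ∫⁻ y in closedBall x t, f y = ∫⁻ y in ball x t, f y := by
  refine le_antisymm ?_ (lintegral_mono_set ball_subset_closedBall)
  calc ∫⁻ y in closedBall x t, f y ≤ ∫⁻ y in ball x t ∪ sphere x t, f y :=
        lintegral_mono_set (by rw [ball_union_sphere])
  _ ≤ (∫⁻ y in ball x t, f y) + ∫⁻ y in sphere x t, f y := lintegral_union_le _ _ _
  _ = ∫⁻ y in ball x t, f y := by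
      rw [setLIntegral_measure_zero _ _ (sphere_null hn x t), add_zero]

lemma vol_closedBall (hn : 0 < n) (x : Rn n) (t : ℝ) :
    volume (closedBall x t) = volume (ball x t) := by
  have := lint_closedBall hn (fun _ => (1:ℝ≥0∞)) x t
  simpa [setLIntegral_const] using this

lemma ofReal_int_abs {b : Rn n → ℝ} {c : ℝ} {s : Set (Rn n)}
    (h : IntegrableOn (fun y => b y - c) s volume) :
    ENNReal.ofReal (∫ y in s, |b y - c|) = J b s c := by
  have := ofReal_integral_norm_eq_lintegral_nnnorm h
  simpa [Real.norm_eq_abs, J] using this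

lemma avg_eq_J (hn : 0 < n) {b : Rn n → ℝ} (c : ℝ) (hb : LocallyIntegrable b volume)
    (x : Rn n) {t : ℝ} (ht : 0 < t) :
    ENNReal.ofReal (⨍ y in closedBall x t, |b y - c|) * volume (ball x t) = J b (ball x t) c := by
  have hint : IntegrableOn (fun y => b y - c) (closedBall x t) volume :=
    (hb.sub (locallyIntegrable_const c)).integrableOn_isCompact (isCompact_closedBall x t)
  have hJ : ENNReal.ofReal (∫ y in closedBall x t, |b y - c|) = J b (ball x t) c := by
    rw [ofReal_int_abs hint, J, J, lint_closedBall hn]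
  have hV : volume (ball x t) = ENNReal.ofReal ((volume (closedBall x t)).toReal) := by
    rw [vol_closedBall hn, ENNReal.ofReal_toReal (vol_ne_top x t)]
  have hVpos : 0 < (volume (closedBall x t)).toReal := by
    rw [vol_closedBall hn]
    exact ENNReal.toReal_pos (vol_pos x ht) (vol_ne_top x t)
  have hInonneg : 0 ≤ ∫ y in closedBall x t, |b y - c| :=
    setIntegral_nonneg measurableSet_closedBall (fun y _ => abs_nonneg _)
  rw [setAverage_eq, measureReal_def, smul_eq_mul, hV,
    ← ENNReal.ofReal_mul (mul_nonneg (inv_nonneg.mpr hVpos.le) hInonneg)]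
  rw [show (volume (closedBall x t)).toReal⁻¹ * (∫ y in closedBall x t, |b y - c|) *
      (volume (closedBall x t)).toReal = ∫ y in closedBall x t, |b y - c| by field_simp]
  exact hJ

lemma avg_le (hn : 0 < n) {b : Rn n → ℝ} (hb : LocallyIntegrable b volume)
    (x : Rn n) {t : ℝ} (ht : 0 < t) (c : ℝ) :
    ENNReal.ofReal |bmoAvg b x t - c| * volume (ball x t) ≤ J b (ball x t) c := by
  have hint : IntegrableOn (fun y => b y - c) (ball x t) volume :=
    ((hb.sub (locallyIntegrable_const c)).integrableOn_isCompact
      (isCompact_closedBall x t)).mono_set ball_subset_closedBall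
  have hbi : IntegrableOn b (ball x t) volume :=
    (hb.integrableOn_isCompact (isCompact_closedBall x t)).mono_set ball_subset_closedBall
  have hVpos : 0 < (volume (ball x t)).toReal :=
    ENNReal.toReal_pos (vol_pos x ht) (vol_ne_top x t)
  set V := (volume (ball x t)).toReal with hVdef
  have havg : bmoAvg b x t - c = V⁻¹ * ∫ y in ball x t, (b y - c) := by
    rw [integral_sub hbi (integrableOn_const measure_ball_lt_top.ne),
      setIntegral_const, bmoAvg, setAverage_eq, smul_eq_mul, smul_eq_mul, measureReal_def, ← hVdef]
    field_simp
  have hInonneg : 0 ≤ ∫ y in ball x t, |b y - c| :=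
    setIntegral_nonneg measurableSet_ball (fun y _ => abs_nonneg _)
  have habs : |bmoAvg b x t - c| ≤ V⁻¹ * ∫ y in ball x t, |b y - c| := by
    rw [havg, abs_mul, abs_inv, abs_of_pos hVpos]
    have h2 : |∫ y in ball x t, (b y - c)| ≤ ∫ y in ball x t, |b y - c| := by
      simpa [Real.norm_eq_abs] using
        norm_integral_le_integral_norm (μ := volume.restrict (ball x t)) (fun y => b y - c)
    exact mul_le_mul_of_nonneg_left h2 (inv_nonneg.mpr hVpos.le)
  calc ENNReal.ofReal |bmoAvg b x t - c| * volume (ball x t)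
      ≤ ENNReal.ofReal (V⁻¹ * ∫ y in ball x t, |b y - c|) * volume (ball x t) :=
        mul_le_mul_left (ENNReal.ofReal_le_ofReal habs) _
  _ = J b (ball x t) c := by
      rw [← ofReal_int_abs hint,
        show volume (ball x t) = ENNReal.ofReal V from (ENNReal.ofReal_toReal (vol_ne_top x t)).symm,
        ← ENNReal.ofReal_mul (mul_nonneg (inv_nonneg.mpr hVpos.le) hInonneg)]
      congr 1
      field_simp

def lam0 (n : ℕ) : ℝ := 1 + 2^n
def lam (n : ℕ) : ℝ := 2 * 10^n * lam0 n
def Ubd (n : ℕ) : ℝ := 4^n * (lam n + lam0 n)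
def c0 (n : ℕ) : ℝ := lam n + Ubd n + 5^n

lemma lam0_pos : 0 < lam0 n := by unfold lam0; positivity
lemma lam_pos : 0 < lam n := by unfold lam lam0; positivity
lemma Ubd_pos : 0 < Ubd n := by unfold Ubd lam lam0; positivity
lemma c0_pos : 0 < c0 n := by unfold c0 Ubd lam lam0; positivity
lemma lam_le_c0 : lam n ≤ c0 n := by
  have h1 := Ubd_pos (n := n)
  have h2 : (0:ℝ) < 5^n := by positivity
  unfold c0; linarith

lemma vol_scale_le (hn : 0 < n) (x y : Rn n) {a t s : ℝ} (ht : 0 ≤ t)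
    (hs : s ≤ a * t) (ha : 0 ≤ a) (hs0 : 0 ≤ s) :
    volume (ball x s) ≤ ENNReal.ofReal (a ^ n) * volume (ball y t) := by
  haveI : Nonempty (Fin n) := Fin.pos_iff_nonempty.mp hn
  rw [Measure.addHaar_ball volume x hs0, Measure.addHaar_ball volume y ht,
    finrank_euclideanSpace_fin, ← mul_assoc, ← ENNReal.ofReal_mul (by positivity), ← mul_pow]
  exact mul_le_mul_left (ENNReal.ofReal_le_ofReal (pow_le_pow_left₀ hs0 hs n)) _

def Dfun (b : Rn n → ℝ) (M : ℝ) : ℝ≥0∞ :=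
  ⨆ (z : Rn n) (ρ : ℝ) (_ : 0 < ρ),
    volume {x ∈ ball z ρ | M < |b x - bmoAvg b z ρ|} / volume (ball z ρ)

lemma vol_le_Dfun (b : Rn n → ℝ) (M : ℝ) (z : Rn n) {ρ : ℝ} (hρ : 0 < ρ) :
    volume {x ∈ ball z ρ | M < |b x - bmoAvg b z ρ|} ≤ Dfun b M * volume (ball z ρ) := by
  have h : volume {x ∈ ball z ρ | M < |b x - bmoAvg b z ρ|} / volume (ball z ρ) ≤ Dfun b M := by
    refine le_trans ?_ (le_iSup _ z)
    refine le_trans ?_ (le_iSup _ ρ)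
    exact le_trans (le_of_eq rfl) (le_iSup (fun _ : 0 < ρ => _) hρ)
  rwa [ENNReal.div_le_iff (vol_pos z hρ) (vol_ne_top z ρ)] at h

lemma Dfun_le_one (b : Rn n → ℝ) (M : ℝ) : Dfun b M ≤ 1 := by
  refine iSup_le fun z => iSup_le fun ρ => iSup_le fun hρ => ?_
  rw [ENNReal.div_le_iff (vol_pos z hρ) (vol_ne_top z ρ), one_mul]
  exact measure_mono (sep_subset _ _)

lemma claim0 (hn : 0 < n) {b : Rn n → ℝ} (hb : LocallyIntegrable b volume)
    (hb1 : bmoNorm b ≤ 1) (z : Rn n) {ρ : ℝ} (hρ : 0 < ρ) :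
    J b (ball z (2*ρ)) (bmoAvg b z ρ) ≤ ENNReal.ofReal (lam0 n) * volume (ball z (2*ρ)) := by
  set c := bmoAvg b z ρ
  set c2 := bmoAvg b z (2*ρ)
  have h2ρ : 0 < 2*ρ := by linarith
  have h1 : J b (ball z (2*ρ)) c2 ≤ volume (ball z (2*ρ)) := by
    refine le_trans (bmo_ball z h2ρ) ?_
    calc bmoNorm b * volume (ball z (2*ρ)) ≤ 1 * volume (ball z (2*ρ)) :=
          mul_le_mul_left hb1 _
    _ = volume (ball z (2*ρ)) := one_mul _
  have hvol2 : volume (ball z (2*ρ)) = ENNReal.ofReal ((2:ℝ)^n) * volume (ball z ρ) :=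
    vol_scale_eq hn z z (by norm_num) hρ.le
  have h2 : ENNReal.ofReal |c2 - c| ≤ ENNReal.ofReal ((2:ℝ)^n) := by
    have hle : ENNReal.ofReal |c - c2| * volume (ball z ρ) ≤
        ENNReal.ofReal ((2:ℝ)^n) * volume (ball z ρ) := by
      calc ENNReal.ofReal |c - c2| * volume (ball z ρ) ≤ J b (ball z ρ) c2 :=
            avg_le hn hb z hρ c2
      _ ≤ J b (ball z (2*ρ)) c2 := J_mono (ball_subset_ball (by linarith)) _
      _ ≤ volume (ball z (2*ρ)) := h1
      _ = ENNReal.ofReal ((2:ℝ)^n) * volume (ball z ρ) := hvol2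
    rw [abs_sub_comm]
    exact (ENNReal.mul_le_mul_iff_left (vol_pos z hρ) (vol_ne_top z ρ)).mp hle
  calc J b (ball z (2*ρ)) c
      ≤ J b (ball z (2*ρ)) c2 + ENNReal.ofReal |c2 - c| * volume (ball z (2*ρ)) :=
        J_triangle b _ c c2
  _ ≤ volume (ball z (2*ρ)) + ENNReal.ofReal ((2:ℝ)^n) * volume (ball z (2*ρ)) := by
      gcongr
  _ = ENNReal.ofReal (lam0 n) * volume (ball z (2*ρ)) := by
      rw [show ENNReal.ofReal (lam0 n) = 1 + ENNReal.ofReal ((2:ℝ)^n) by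
        rw [show (1:ℝ≥0∞) = ENNReal.ofReal 1 by simp,
          ← ENNReal.ofReal_add (by norm_num) (by positivity)]; rfl, add_mul, one_mul]

lemma select (hn : 0 < n) {b : Rn n → ℝ} (hb : LocallyIntegrable b volume)
    (hb1 : bmoNorm b ≤ 1) (z : Rn n) {ρ : ℝ} (hρ : 0 < ρ) {x : Rn n} (hx : x ∈ ball z ρ)
    (hgt : lam n < |b x - bmoAvg b z ρ|)
    (hLeb : Tendsto (fun t => ⨍ y in closedBall x t, |b y - bmoAvg b z ρ|) (𝓝[>] 0)
      (𝓝 (|b x - bmoAvg b z ρ|))) :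
    ∃ t', 0 < t' ∧ t' ≤ ρ ∧
      ENNReal.ofReal (lam n) * volume (ball x t') < J b (ball x t') (bmoAvg b z ρ) ∧
      J b (ball x t') (bmoAvg b z ρ) ≤ ENNReal.ofReal (Ubd n) * volume (ball x t') := by
  set c := bmoAvg b z ρ with hc
  set S := {t : ℝ | 0 < t ∧ t ≤ ρ ∧
    ENNReal.ofReal (lam n) * volume (ball x t) < J b (ball x t) c} with hS
  -- small radii are in S
  have havgJ : ∀ t : ℝ, 0 < t → lam n < ⨍ y in closedBall x t, |b y - c| →
      ENNReal.ofReal (lam n) * volume (ball x t) < J b (ball x t) c := by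
    intro t ht havg
    rw [← avg_eq_J hn c hb x ht]
    exact ENNReal.mul_lt_mul_left (vol_pos x ht) (vol_ne_top x t) <|
      (ENNReal.ofReal_lt_ofReal_iff (lt_trans (lam_pos) havg)).mpr havg
  have hS1 : ∃ t1, t1 ∈ S := by
    have h1 : ∀ᶠ t in 𝓝[>] (0:ℝ), lam n < ⨍ y in closedBall x t, |b y - c| :=
      hLeb.eventually_const_lt hgt
    have h2 : Ioo (0:ℝ) ρ ∈ 𝓝[>] (0:ℝ) := Ioo_mem_nhdsGT hρ
    obtain ⟨t1, ht1, ht1'⟩ := (h1.and (eventually_mem_set.mpr h2)).exists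
    exact ⟨t1, ht1'.1, ht1'.2.le, havgJ t1 ht1'.1 ht1⟩
  obtain ⟨t1, ht1⟩ := hS1
  have hbdd : BddAbove S := ⟨ρ, fun t htS => htS.2.1⟩
  set T := sSup S with hT
  have hTt1 : t1 ≤ T := le_csSup hbdd ht1
  have hTpos : 0 < T := lt_of_lt_of_le ht1.1 hTt1
  obtain ⟨t', ht'S, ht'⟩ := exists_lt_of_lt_csSup ⟨t1, ht1⟩ (by linarith : T/2 < T)
  refine ⟨t', ht'S.1, ht'S.2.1, ht'S.2.2, ?_⟩
  by_cases h2 : 2*t' ≤ ρ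
  · have h2T : (2*t') ∉ S := fun hmem => absurd (le_csSup hbdd hmem) (by linarith)
    have hle : J b (ball x (2*t')) c ≤ ENNReal.ofReal (lam n) * volume (ball x (2*t')) := by
      by_contra hcon
      exact h2T ⟨by linarith [ht'S.1], h2, not_le.mp hcon⟩
    calc J b (ball x t') c ≤ J b (ball x (2*t')) c :=
          J_mono (ball_subset_ball (by linarith [ht'S.1])) _
    _ ≤ ENNReal.ofReal (lam n) * volume (ball x (2*t')) := hle
    _ = ENNReal.ofReal (lam n) * (ENNReal.ofReal ((2:ℝ)^n) * volume (ball x t')) := by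
        rw [vol_scale_eq hn x x (by norm_num) ht'S.1.le]
    _ ≤ ENNReal.ofReal (Ubd n) * volume (ball x t') := by
        rw [← mul_assoc, ← ENNReal.ofReal_mul (lam_pos (n:=n)).le]
        refine mul_le_mul_left (ENNReal.ofReal_le_ofReal ?_) _
        have h4 : (2:ℝ)^n ≤ 4^n := pow_le_pow_left₀ (by norm_num) (by norm_num) n
        have hl := lam_pos (n := n); have hl0 := lam0_pos (n := n)
        have h4p : (0:ℝ) < 4^n := by positivity
        have h5 : lam n * 2^n ≤ lam n * 4^n := mul_le_mul_of_nonneg_left h4 hl.le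
        unfold Ubd
        nlinarith [mul_pos h4p hl0]
  · push_neg at h2
    have hsub : ball x t' ⊆ ball z (2*ρ) := by
      intro y hy
      rw [mem_ball] at *
      have := dist_triangle y x z
      linarith [ht'S.2.1]
    calc J b (ball x t') c ≤ J b (ball z (2*ρ)) c := J_mono hsub _
    _ ≤ ENNReal.ofReal (lam0 n) * volume (ball z (2*ρ)) := claim0 hn hb hb1 z hρ
    _ ≤ ENNReal.ofReal (lam0 n) * (ENNReal.ofReal ((4:ℝ)^n) * volume (ball x t')) := by
        refine mul_le_mul_right (vol_scale_le hn z x ht'S.1.le (by linarith) (by norm_num)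
          (by linarith)) _
    _ ≤ ENNReal.ofReal (Ubd n) * volume (ball x t') := by
        rw [← mul_assoc, ← ENNReal.ofReal_mul (lam0_pos (n:=n)).le]
        refine mul_le_mul_left (ENNReal.ofReal_le_ofReal ?_) _
        have hl := lam_pos (n := n); have hl0 := lam0_pos (n := n)
        have h4 : (0:ℝ) < 4^n := by positivity
        unfold Ubd
        nlinarith [mul_pos h4 hl]

lemma rec_step (hn : 0 < n) {b : Rn n → ℝ} (hb : LocallyIntegrable b volume)
    (hb1 : bmoNorm b ≤ 1) {M : ℝ} (hM : 0 ≤ M) (z : Rn n) {ρ : ℝ} (hρ : 0 < ρ) :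
    volume {x ∈ ball z ρ | M + c0 n < |b x - bmoAvg b z ρ|} ≤
      2⁻¹ * (Dfun b M * volume (ball z ρ)) := by
  set c := bmoAvg b z ρ with hc
  have hg : LocallyIntegrable (fun y => |b y - c|) volume := by
    rw [locallyIntegrable_iff]
    intro k hk
    have h2' := ((hb.sub (locallyIntegrable_const c)).integrableOn_isCompact hk).norm
    simpa [Real.norm_eq_abs, IntegrableOn] using h2'
  have hLeb : ∀ᵐ x ∂(volume : Measure (Rn n)),
      Tendsto (fun t => ⨍ y in closedBall x t, |b y - c|) (𝓝[>] 0) (𝓝 (|b x - c|)) := by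
    filter_upwards [IsUnifLocDoublingMeasure.ae_tendsto_average
      (μ := (volume : Measure (Rn n))) hg 1] with x hx
    refine hx (fun _ => x) id tendsto_id ?_
    filter_upwards [self_mem_nhdsWithin] with t ht
    simp only [mem_Ioi] at ht
    exact mem_closedBall_self (by linarith : (0:ℝ) ≤ 1 * t)
  set L := {x : Rn n |
    Tendsto (fun t => ⨍ y in closedBall x t, |b y - c|) (𝓝[>] 0) (𝓝 (|b x - c|))} with hL
  have hLc : volume Lᶜ = 0 := ae_iff.mp hLeb
  set E := {x : Rn n | x ∈ ball z ρ ∧ M + c0 n < |b x - c| ∧ x ∈ L} with hE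
  have hsel : ∀ x ∈ E, ∃ t', 0 < t' ∧ t' ≤ ρ ∧
      ENNReal.ofReal (lam n) * volume (ball x t') < J b (ball x t') c ∧
      J b (ball x t') c ≤ ENNReal.ofReal (Ubd n) * volume (ball x t') := by
    intro x hx
    refine select hn hb hb1 z hρ hx.1 ?_ hx.2.2
    have := lam_le_c0 (n := n)
    linarith [hx.2.1]
  choose! rr h1 h2 h3 h4 using hsel
  obtain ⟨u, huE, hdisj, hcov⟩ := Vitali.exists_disjoint_subfamily_covering_enlargement_closedBall
    E id rr ρ (fun a ha => (h2 a ha)) 4 (by norm_num)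
  have hrrpos : ∀ i ∈ u, 0 < rr i := fun i hi => h1 i (huE hi)
  have hucount : u.Countable := by
    refine hdisj.countable_of_nonempty_interior fun i hi => ?_
    rw [id, interior_closedBall _ (hrrpos i hi).ne']
    exact ⟨i, mem_ball_self (hrrpos i hi)⟩
  have hEcov : E ⊆ ⋃ i ∈ u, ball i (5 * rr i) := by
    intro a ha
    obtain ⟨i, hiu, hsub⟩ := hcov a ha
    have hai : a ∈ closedBall (id a) (rr a) := mem_closedBall_self (h1 a ha).le
    have h5 := hsub hai
    simp only [id_eq] at h5
    refine mem_biUnion hiu ?_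
    have hri : 0 < rr i := hrrpos i hiu
    exact mem_ball.mpr (lt_of_le_of_lt (mem_closedBall.mp h5) (by linarith))
  set Tgt := {x ∈ ball z ρ | M + c0 n < |b x - c|} with hTgt
  have step1 : volume Tgt ≤ ∑' i : u, volume (Tgt ∩ ball (i : Rn n) (5 * rr i)) := by
    have hsub2 : Tgt ⊆ (⋃ i ∈ u, (Tgt ∩ ball i (5 * rr i))) ∪ Lᶜ := by
      intro x hx
      by_cases hLx : x ∈ L
      · have hxE : x ∈ E := ⟨hx.1, hx.2, hLx⟩
        have := hEcov hxE
        simp only [mem_iUnion] at this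
        obtain ⟨i, hi, hmem⟩ := this
        exact Or.inl (mem_biUnion hi ⟨hx, hmem⟩)
      · exact Or.inr hLx
    calc volume Tgt ≤ volume (⋃ i ∈ u, (Tgt ∩ ball i (5 * rr i))) + volume Lᶜ :=
          le_trans (measure_mono hsub2) (measure_union_le _ _)
    _ = volume (⋃ i ∈ u, (Tgt ∩ ball i (5 * rr i))) := by rw [hLc, add_zero]
    _ ≤ ∑' i : u, volume (Tgt ∩ ball (i : Rn n) (5 * rr i)) :=
          measure_biUnion_le _ hucount _
  have hper : ∀ i ∈ u, volume (Tgt ∩ ball i (5 * rr i)) ≤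
      Dfun b M * volume (ball i (5 * rr i)) := by
    intro i hiu
    have hri : 0 < rr i := hrrpos i hiu
    have h5ri : 0 < 5 * rr i := by linarith
    have hJle := h4 i (huE hiu)
    have ha1 : |bmoAvg b i (rr i) - c| ≤ Ubd n := by
      have hav := avg_le hn hb i hri c
      have hle2 : ENNReal.ofReal |bmoAvg b i (rr i) - c| * volume (ball i (rr i)) ≤
          ENNReal.ofReal (Ubd n) * volume (ball i (rr i)) := le_trans hav hJle
      exact (ENNReal.ofReal_le_ofReal_iff (Ubd_pos).le).mp
        ((ENNReal.mul_le_mul_iff_left (vol_pos i hri) (vol_ne_top _ _)).mp hle2)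
    have ha2 : |bmoAvg b i (rr i) - bmoAvg b i (5 * rr i)| ≤ 5^n := by
      set c5 := bmoAvg b i (5 * rr i)
      have hstep : ENNReal.ofReal |bmoAvg b i (rr i) - c5| * volume (ball i (rr i)) ≤
          ENNReal.ofReal ((5:ℝ)^n) * volume (ball i (rr i)) := by
        calc ENNReal.ofReal |bmoAvg b i (rr i) - c5| * volume (ball i (rr i))
            ≤ J b (ball i (rr i)) c5 := avg_le hn hb i hri c5
        _ ≤ J b (ball i (5 * rr i)) c5 := J_mono (ball_subset_ball (by linarith)) _
        _ ≤ bmoNorm b * volume (ball i (5 * rr i)) := bmo_ball i h5ri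
        _ ≤ 1 * volume (ball i (5 * rr i)) := mul_le_mul_left hb1 _
        _ = ENNReal.ofReal ((5:ℝ)^n) * volume (ball i (rr i)) := by
            rw [one_mul, vol_scale_eq hn i i (by norm_num : (0:ℝ) ≤ 5) hri.le]
      exact (ENNReal.ofReal_le_ofReal_iff (by positivity)).mp
        ((ENNReal.mul_le_mul_iff_left (vol_pos i hri) (vol_ne_top _ _)).mp hstep)
    have hincl : Tgt ∩ ball i (5 * rr i) ⊆
        {y ∈ ball i (5 * rr i) | M < |b y - bmoAvg b i (5 * rr i)|} := by
      intro y hy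
      refine ⟨hy.2, ?_⟩
      have h1' : M + c0 n < |b y - c| := hy.1.2
      have htri : |b y - c| ≤ |b y - bmoAvg b i (5*rr i)| + |bmoAvg b i (5*rr i) - c| :=
        abs_sub_le _ _ _
      have htri2 : |bmoAvg b i (5*rr i) - c| ≤
          |bmoAvg b i (5*rr i) - bmoAvg b i (rr i)| + |bmoAvg b i (rr i) - c| :=
        abs_sub_le _ _ _
      rw [abs_sub_comm] at ha2
      have hlam := lam_pos (n := n)
      have hc0 : c0 n = lam n + Ubd n + 5^n := rfl
      linarith
    calc volume (Tgt ∩ ball i (5 * rr i))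
        ≤ volume {y ∈ ball i (5*rr i) | M < |b y - bmoAvg b i (5*rr i)|} := measure_mono hincl
    _ ≤ Dfun b M * volume (ball i (5 * rr i)) := vol_le_Dfun b M i h5ri
  have hsum : ∑' i : u, volume (ball (i : Rn n) (5 * rr i)) ≤ 2⁻¹ * volume (ball z ρ) := by
    have hball_le : ∀ i : u, volume (ball (i : Rn n) (5 * rr i)) ≤
        ENNReal.ofReal ((5:ℝ)^n) *
          ((ENNReal.ofReal (lam n))⁻¹ * J b (ball (i : Rn n) (rr i)) c) := by
      intro i
      have hiE := huE i.2
      have hri : 0 < rr i := h1 i hiE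
      have hlow := (h3 i hiE).le
      have hv : volume (ball (i : Rn n) (rr i)) ≤
          (ENNReal.ofReal (lam n))⁻¹ * J b (ball (i : Rn n) (rr i)) c := by
        calc volume (ball (i : Rn n) (rr i))
            = (ENNReal.ofReal (lam n))⁻¹ *
              (ENNReal.ofReal (lam n) * volume (ball (i : Rn n) (rr i))) := by
              rw [← mul_assoc, ENNReal.inv_mul_cancel
                (ENNReal.ofReal_pos.mpr (lam_pos (n := n))).ne' ENNReal.ofReal_ne_top,
                one_mul]
        _ ≤ _ := mul_le_mul_right hlow _
      calc volume (ball (i : Rn n) (5 * rr i))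
          = ENNReal.ofReal ((5:ℝ)^n) * volume (ball (i : Rn n) (rr i)) :=
            vol_scale_eq hn _ _ (by norm_num) hri.le
      _ ≤ _ := mul_le_mul_right hv _
    haveI := hucount.to_subtype
    have hdisj' : Pairwise (Function.onFun Disjoint fun i : u => ball (i : Rn n) (rr i)) := by
      intro i j hij
      exact (hdisj i.2 j.2 (Subtype.coe_injective.ne hij)).mono
        ball_subset_closedBall ball_subset_closedBall
    have hJsum : ∑' i : u, J b (ball (i : Rn n) (rr i)) c ≤
        ENNReal.ofReal (lam0 n * 2^n) * volume (ball z ρ) := by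
      have heq : ∑' i : u, J b (ball (i : Rn n) (rr i)) c =
          ∫⁻ y in ⋃ i : u, ball (i : Rn n) (rr i), (‖b y - c‖₊ : ℝ≥0∞) :=
        (lintegral_iUnion (fun i => measurableSet_ball) hdisj' _).symm
      rw [heq]
      have hsub3 : (⋃ i : u, ball (i : Rn n) (rr i)) ⊆ ball z (2*ρ) := by
        rintro y hy
        simp only [mem_iUnion] at hy
        obtain ⟨i, hyi⟩ := hy
        have hiE := huE i.2
        have hiB : (i : Rn n) ∈ ball z ρ := hiE.1
        have hrle : rr (i : Rn n) ≤ ρ := h2 i hiE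
        rw [mem_ball] at *
        have := dist_triangle y (i : Rn n) z
        linarith
      calc ∫⁻ y in ⋃ i : u, ball (i : Rn n) (rr i), (‖b y - c‖₊ : ℝ≥0∞)
          ≤ J b (ball z (2*ρ)) c := lintegral_mono_set hsub3
      _ ≤ ENNReal.ofReal (lam0 n) * volume (ball z (2*ρ)) := claim0 hn hb hb1 z hρ
      _ = ENNReal.ofReal (lam0 n) * (ENNReal.ofReal ((2:ℝ)^n) * volume (ball z ρ)) := by
          rw [vol_scale_eq hn z z (by norm_num : (0:ℝ) ≤ 2) hρ.le]
      _ = ENNReal.ofReal (lam0 n * 2^n) * volume (ball z ρ) := by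
          rw [← mul_assoc, ← ENNReal.ofReal_mul (lam0_pos (n := n)).le]
    calc ∑' i : u, volume (ball (i : Rn n) (5 * rr i))
        ≤ ∑' i : u, ENNReal.ofReal ((5:ℝ)^n) *
            ((ENNReal.ofReal (lam n))⁻¹ * J b (ball (i : Rn n) (rr i)) c) :=
          ENNReal.tsum_le_tsum hball_le
    _ = ENNReal.ofReal ((5:ℝ)^n) * ((ENNReal.ofReal (lam n))⁻¹ *
          ∑' i : u, J b (ball (i : Rn n) (rr i)) c) := by
        rw [ENNReal.tsum_mul_left, ENNReal.tsum_mul_left]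
    _ ≤ ENNReal.ofReal ((5:ℝ)^n) * ((ENNReal.ofReal (lam n))⁻¹ *
          (ENNReal.ofReal (lam0 n * 2^n) * volume (ball z ρ))) := by gcongr
    _ = (ENNReal.ofReal ((5:ℝ)^n) * (ENNReal.ofReal (lam n))⁻¹ *
          ENNReal.ofReal (lam0 n * 2^n)) * volume (ball z ρ) := by ring
    _ = 2⁻¹ * volume (ball z ρ) := by
        congr 1
        rw [← ENNReal.ofReal_inv_of_pos (lam_pos (n := n)),
          ← ENNReal.ofReal_mul (by positivity : (0:ℝ) ≤ 5^n),
          ← ENNReal.ofReal_mul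
            (mul_nonneg (by positivity : (0:ℝ) ≤ 5^n) (inv_nonneg.mpr (lam_pos (n := n)).le))]
        rw [show (5:ℝ)^n * (lam n)⁻¹ * (lam0 n * 2^n) = 2⁻¹ by
          have h10 : (5:ℝ)^n * 2^n = 10^n := by rw [← mul_pow]; norm_num
          have hl0 := lam0_pos (n := n)
          have h10p : (0:ℝ) < 10^n := by positivity
          rw [show lam n = 2 * 10^n * lam0 n from rfl]
          field_simp
          nlinarith [h10]]
        rw [show ((2:ℝ≥0∞))⁻¹ = ENNReal.ofReal 2⁻¹ by
          rw [ENNReal.ofReal_inv_of_pos (by norm_num)]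
          norm_num]
  calc volume Tgt ≤ ∑' i : u, volume (Tgt ∩ ball (i : Rn n) (5 * rr i)) := step1
  _ ≤ ∑' i : u, Dfun b M * volume (ball (i : Rn n) (5 * rr i)) :=
      ENNReal.tsum_le_tsum (fun i => hper i i.2)
  _ = Dfun b M * ∑' i : u, volume (ball (i : Rn n) (5 * rr i)) := ENNReal.tsum_mul_left
  _ ≤ Dfun b M * (2⁻¹ * volume (ball z ρ)) := mul_le_mul_right hsum _
  _ = 2⁻¹ * (Dfun b M * volume (ball z ρ)) := by ring

lemma Dfun_rec (hn : 0 < n) {b : Rn n → ℝ} (hb : LocallyIntegrable b volume)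
    (hb1 : bmoNorm b ≤ 1) {M : ℝ} (hM : 0 ≤ M) :
    Dfun b (M + c0 n) ≤ 2⁻¹ * Dfun b M := by
  refine iSup_le fun z => iSup_le fun ρ => iSup_le fun hρ => ?_
  rw [ENNReal.div_le_iff (vol_pos z hρ) (vol_ne_top z ρ)]
  exact (rec_step hn hb hb1 hM z hρ).trans (le_of_eq (mul_assoc _ _ _).symm)

lemma Dfun_decay (hn : 0 < n) {b : Rn n → ℝ} (hb : LocallyIntegrable b volume)
    (hb1 : bmoNorm b ≤ 1) : ∀ k : ℕ, Dfun b (((k:ℝ)+1) * c0 n) ≤ 2⁻¹ ^ (k+1) := by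
  intro k
  induction k with
  | zero =>
      simp only [Nat.cast_zero, zero_add, one_mul, pow_one]
      have h := Dfun_rec hn hb hb1 (le_refl (0:ℝ))
      rw [zero_add] at h
      calc Dfun b (c0 n) ≤ 2⁻¹ * Dfun b 0 := h
      _ ≤ 2⁻¹ * 1 := mul_le_mul_right (Dfun_le_one b 0) _
      _ = 2⁻¹ := mul_one _
  | succ j ih =>
      push_cast
      have h0 : ((j:ℝ)+1+1) * c0 n = ((j:ℝ)+1) * c0 n + c0 n := by ring
      rw [h0]
      have hM : (0:ℝ) ≤ ((j:ℝ)+1) * c0 n := mul_nonneg (by positivity) (c0_pos (n := n)).le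
      calc Dfun b (((j:ℝ)+1) * c0 n + c0 n)
          ≤ 2⁻¹ * Dfun b (((j:ℝ)+1) * c0 n) := Dfun_rec hn hb hb1 hM
      _ ≤ 2⁻¹ * 2⁻¹ ^ (j+1) := mul_le_mul_right ih _
      _ = 2⁻¹ ^ (j+1+1) := by rw [pow_succ]; ring

lemma Dfun_pow (hn : 0 < n) {b : Rn n → ℝ} (hb : LocallyIntegrable b volume)
    (hb1 : bmoNorm b ≤ 1) : ∀ k : ℕ, Dfun b ((k:ℝ) * c0 n) ≤ 2 * 2⁻¹ ^ k := by
  intro k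
  cases k with
  | zero =>
      refine le_trans (Dfun_le_one _ _) (by norm_num)
  | succ j =>
      have hcast : ((j+1 : ℕ):ℝ) = (j:ℝ)+1 := by push_cast; ring
      rw [hcast]
      calc Dfun b (((j:ℝ)+1) * c0 n) ≤ 2⁻¹ ^ (j+1) := Dfun_decay hn hb hb1 j
      _ ≤ 2 * 2⁻¹ ^ (j+1) := le_mul_of_one_le_left (zero_le') (by norm_num)

def Cp (n : ℕ) (p : ℝ) : ℝ≥0∞ :=
  ∑' k : ℕ, ENNReal.ofReal ((((k:ℝ)+1) * c0 n)^p) * (4 * 2⁻¹^k)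

lemma Cp_ne_top (n : ℕ) {p : ℝ} (hp : 1 ≤ p) : Cp n p ≠ ⊤ := by
  set a : ℕ → ℝ := fun k => (((k:ℝ)+1) * c0 n)^p * (4 * (2⁻¹:ℝ)^k) with ha
  have hterm : ∀ k : ℕ, ENNReal.ofReal ((((k:ℝ)+1) * c0 n)^p) * (4 * 2⁻¹^k) =
      ENNReal.ofReal (a k) := by
    intro k
    have h2 : ((2:ℝ≥0∞))⁻¹ = ENNReal.ofReal 2⁻¹ := by
      rw [ENNReal.ofReal_inv_of_pos (by norm_num)]; norm_num
    have h4 : (4:ℝ≥0∞) = ENNReal.ofReal 4 := by norm_num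
    have hc := c0_pos (n := n)
    have hnn : (0:ℝ) ≤ (((k:ℝ)+1) * c0 n)^p :=
      Real.rpow_nonneg (mul_nonneg (by positivity) hc.le) p
    rw [ha, h2, h4, ← ENNReal.ofReal_pow (by norm_num), ← ENNReal.ofReal_mul (by norm_num),
      ← ENNReal.ofReal_mul hnn]
  have hanonneg : ∀ k, 0 ≤ a k := by
    intro k
    have hc := c0_pos (n := n)
    exact mul_nonneg (Real.rpow_nonneg (mul_nonneg (by positivity) hc.le) p) (by positivity)
  have hsummable : Summable a := by
    set N := ⌈p⌉₊ with hN
    have hg : Summable (fun k : ℕ => (k:ℝ)^N * (2⁻¹:ℝ)^k) :=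
      summable_pow_mul_geometric_of_norm_lt_one N (by norm_num)
    have hg1 : Summable (fun k : ℕ => ((k:ℝ)+1)^N * (2⁻¹:ℝ)^(k+1)) := by
      have := (summable_nat_add_iff 1).mpr hg
      simpa [pow_succ, Nat.cast_add, Nat.cast_one] using this
    have hc := c0_pos (n := n)
    refine Summable.of_nonneg_of_le hanonneg ?_ (hg1.mul_left ((c0 n)^p * 8))
    intro k
    have hb1 : (1:ℝ) ≤ (k:ℝ)+1 := le_add_of_nonneg_left (Nat.cast_nonneg k)
    have hup : (((k:ℝ)+1))^p ≤ ((k:ℝ)+1)^(N:ℝ) :=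
      Real.rpow_le_rpow_of_exponent_le hb1 (Nat.le_ceil p)
    have hup2 : (((k:ℝ)+1))^p ≤ ((k:ℝ)+1)^N := by
      rwa [Real.rpow_natCast] at hup
    have hmul : (((k:ℝ)+1) * c0 n)^p = ((k:ℝ)+1)^p * (c0 n)^p :=
      Real.mul_rpow (by positivity) hc.le
    rw [ha]
    simp only
    rw [hmul]
    have hpow2 : (0:ℝ) < (2⁻¹:ℝ)^k := by positivity
    calc ((k:ℝ)+1)^p * (c0 n)^p * (4 * (2⁻¹:ℝ)^k)
        ≤ ((k:ℝ)+1)^N * (c0 n)^p * (4 * (2⁻¹:ℝ)^k) := by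
          have h0 : (0:ℝ) ≤ (c0 n)^p * (4 * (2⁻¹:ℝ)^k) := by positivity
          nlinarith [mul_le_mul_of_nonneg_right hup2 h0]
    _ = (c0 n)^p * 8 * (((k:ℝ)+1)^N * (2⁻¹:ℝ)^(k+1)) := by rw [pow_succ]; ring
  rw [Cp, tsum_congr hterm, ← ENNReal.ofReal_tsum_of_nonneg hanonneg hsummable]
  exact ENNReal.ofReal_ne_top

lemma JN_norm (hn : 0 < n) {b : Rn n → ℝ} (hb : LocallyIntegrable b volume)
    (hmeas : Measurable b) (hb1 : bmoNorm b ≤ 1) {p : ℝ} (hp : 1 ≤ p)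
    (z : Rn n) {ρ : ℝ} (hρ : 0 < ρ) :
    ∫⁻ x in ball z ρ, (‖b x - bmoAvg b z ρ‖₊ : ℝ≥0∞) ^ p ≤ Cp n p * volume (ball z ρ) := by
  set c := bmoAvg b z ρ with hc
  have hc0 := c0_pos (n := n)
  set Sk : ℕ → Set (Rn n) := fun k =>
    {x ∈ ball z ρ | (k:ℝ) * c0 n ≤ |b x - c| ∧ |b x - c| < ((k:ℝ)+1) * c0 n} with hSk
  have hcov : ball z ρ ⊆ ⋃ k, Sk k := by
    intro x hx
    have hv : 0 ≤ |b x - c| := abs_nonneg _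
    refine mem_iUnion.mpr ⟨⌊|b x - c| / c0 n⌋₊, hx, ?_, ?_⟩
    · have h := Nat.floor_le (div_nonneg hv hc0.le)
      calc (⌊|b x - c| / c0 n⌋₊ : ℝ) * c0 n ≤ (|b x - c| / c0 n) * c0 n := by nlinarith
      _ = |b x - c| := by field_simp
    · have h := Nat.lt_floor_add_one (|b x - c| / c0 n)
      calc |b x - c| = (|b x - c| / c0 n) * c0 n := by field_simp
      _ < ((⌊|b x - c| / c0 n⌋₊:ℝ)+1) * c0 n := by nlinarith
  have hSvol : ∀ k, volume (Sk k) ≤ 4 * 2⁻¹^k * volume (ball z ρ) := by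
    intro k
    cases k with
    | zero =>
        calc volume (Sk 0) ≤ volume (ball z ρ) := measure_mono (sep_subset _ _)
        _ ≤ 4 * 2⁻¹^0 * volume (ball z ρ) := by
            rw [pow_zero, mul_one]
            exact le_mul_of_one_le_left (zero_le') (by norm_num)
    | succ j =>
        have hsub : Sk (j+1) ⊆ {x ∈ ball z ρ | (j:ℝ) * c0 n < |b x - c|} := by
          intro x hx
          refine ⟨hx.1, ?_⟩
          have h1 := hx.2.1
          have hcast : ((j+1:ℕ):ℝ) = (j:ℝ)+1 := by push_cast; ring
          rw [hcast] at h1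
          nlinarith
        calc volume (Sk (j+1)) ≤ volume {x ∈ ball z ρ | (j:ℝ) * c0 n < |b x - c|} :=
              measure_mono hsub
        _ ≤ Dfun b ((j:ℝ) * c0 n) * volume (ball z ρ) := vol_le_Dfun b _ z hρ
        _ ≤ (2 * 2⁻¹^j) * volume (ball z ρ) := mul_le_mul_left (Dfun_pow hn hb hb1 j) _
        _ = 4 * 2⁻¹^(j+1) * volume (ball z ρ) := by
            congr 1
            rw [pow_succ, show (4:ℝ≥0∞) = 2*2 by norm_num, mul_comm (2⁻¹^j) 2⁻¹,
              mul_assoc 2 2, ← mul_assoc 2 2⁻¹,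
              ENNReal.mul_inv_cancel (by norm_num) (by norm_num), one_mul]
  have hbnd : ∀ k : ℕ, ∫⁻ x in Sk k, (‖b x - c‖₊ : ℝ≥0∞) ^ p ≤
      ENNReal.ofReal ((((k:ℝ)+1) * c0 n)^p) * (4 * 2⁻¹^k) * volume (ball z ρ) := by
    intro k
    have hf : Measurable fun x => |b x - c| := (hmeas.sub measurable_const).abs
    have hmeasS : MeasurableSet (Sk k) := by
      refine measurableSet_ball.inter (MeasurableSet.inter ?_ ?_)
      · exact hf measurableSet_Ici
      · exact hf measurableSet_Iio
    have hub : ∀ x ∈ Sk k, (‖b x - c‖₊ : ℝ≥0∞) ^ p ≤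
        ENNReal.ofReal ((((k:ℝ)+1) * c0 n)^p) := by
      intro x hx
      have h1 : (‖b x - c‖₊ : ℝ≥0∞) = ENNReal.ofReal |b x - c| :=
        Real.ennnorm_eq_ofReal_abs _
      rw [h1, ENNReal.ofReal_rpow_of_nonneg (abs_nonneg _) (by linarith : (0:ℝ) ≤ p)]
      exact ENNReal.ofReal_le_ofReal
        (Real.rpow_le_rpow (abs_nonneg _) hx.2.2.le (by linarith))
    calc ∫⁻ x in Sk k, (‖b x - c‖₊ : ℝ≥0∞) ^ p
        ≤ ∫⁻ _ in Sk k, ENNReal.ofReal ((((k:ℝ)+1) * c0 n)^p) := setLIntegral_mono' hmeasS hub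
    _ = ENNReal.ofReal ((((k:ℝ)+1) * c0 n)^p) * volume (Sk k) := by
        rw [setLIntegral_const]
    _ ≤ ENNReal.ofReal ((((k:ℝ)+1) * c0 n)^p) * (4 * 2⁻¹^k * volume (ball z ρ)) :=
        mul_le_mul_right (hSvol k) _
    _ = ENNReal.ofReal ((((k:ℝ)+1) * c0 n)^p) * (4 * 2⁻¹^k) * volume (ball z ρ) := by ring
  calc ∫⁻ x in ball z ρ, (‖b x - c‖₊ : ℝ≥0∞) ^ p
      ≤ ∫⁻ x in ⋃ k, Sk k, (‖b x - c‖₊ : ℝ≥0∞) ^ p := lintegral_mono_set hcov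
  _ ≤ ∑' k : ℕ, ∫⁻ x in Sk k, (‖b x - c‖₊ : ℝ≥0∞) ^ p := lintegral_iUnion_le _ _
  _ ≤ ∑' k : ℕ, ENNReal.ofReal ((((k:ℝ)+1) * c0 n)^p) * (4 * 2⁻¹^k) * volume (ball z ρ) :=
      ENNReal.tsum_le_tsum hbnd
  _ = Cp n p * volume (ball z ρ) := by rw [Cp, ENNReal.tsum_mul_right]

lemma bmoAvg_smul (b : Rn n → ℝ) (t : ℝ) (z : Rn n) (ρ : ℝ) :
    bmoAvg (fun x => t * b x) z ρ = t * bmoAvg b z ρ := by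
  rw [bmoAvg, bmoAvg, setAverage_eq, setAverage_eq, integral_const_mul, smul_eq_mul, smul_eq_mul]
  ring

lemma bmoNorm_smul (b : Rn n → ℝ) {t : ℝ} (ht : 0 ≤ t) :
    bmoNorm (fun x => t * b x) = ENNReal.ofReal t * bmoNorm b := by
  unfold bmoNorm
  rw [ENNReal.mul_iSup]
  refine iSup_congr fun z => ?_
  rw [ENNReal.mul_iSup]
  refine iSup_congr fun r => ?_
  rw [ENNReal.mul_iSup]
  refine iSup_congr fun hr => ?_
  rw [bmoAvg_smul]
  have hpt : ∀ x, (‖t * b x - t * bmoAvg b z r‖₊ : ℝ≥0∞) =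
      ENNReal.ofReal t * (‖b x - bmoAvg b z r‖₊ : ℝ≥0∞) := by
    intro x
    rw [← mul_sub, Real.ennnorm_eq_ofReal_abs, Real.ennnorm_eq_ofReal_abs, abs_mul,
      abs_of_nonneg ht, ENNReal.ofReal_mul ht]
  rw [lintegral_congr fun x => hpt x, lintegral_const_mul' _ _ ENNReal.ofReal_ne_top,
    mul_div_assoc]

lemma bmoAvg_congr {b b' : Rn n → ℝ} (h : b =ᵐ[volume] b') (z : Rn n) (ρ : ℝ) :
    bmoAvg b z ρ = bmoAvg b' z ρ := by
  unfold bmoAvg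
  exact average_congr (ae_restrict_of_ae h)

lemma bmoNorm_congr {b b' : Rn n → ℝ} (h : b =ᵐ[volume] b') : bmoNorm b = bmoNorm b' := by
  unfold bmoNorm
  refine iSup_congr fun z => iSup_congr fun ρ => iSup_congr fun hρ => ?_
  rw [bmoAvg_congr h z ρ]
  congr 1
  refine lintegral_congr_ae ?_
  filter_upwards [ae_restrict_of_ae h] with x hx
  rw [hx]

lemma JN_final (hn : 0 < n) {p : ℝ} (hp : 1 ≤ p) :
    ∃ C : ℝ≥0∞, C ≠ ⊤ ∧ ∀ b : Rn n → ℝ, LocallyIntegrable b volume →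
      ∀ (z : Rn n) (ρ : ℝ), 0 < ρ →
      ∫⁻ x in ball z ρ, (‖b x - bmoAvg b z ρ‖₊ : ℝ≥0∞) ^ p ≤
        (C * bmoNorm b ^ p) * volume (ball z ρ) := by
  refine ⟨Cp n p + 1, by simp [Cp_ne_top n hp], ?_⟩
  intro b₀ hb₀ z ρ hρ
  -- replace by measurable representative
  obtain ⟨b, hmeas, hae⟩ : ∃ b : Rn n → ℝ, Measurable b ∧ b₀ =ᵐ[volume] b :=
    ⟨hb₀.aestronglyMeasurable.mk _, hb₀.aestronglyMeasurable.stronglyMeasurable_mk.measurable,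
      hb₀.aestronglyMeasurable.ae_eq_mk⟩
  have hb : LocallyIntegrable b volume := by
    rw [locallyIntegrable_iff]
    intro k hk
    exact (hb₀.integrableOn_isCompact hk).congr (ae_restrict_of_ae hae)
  have hLHS : ∫⁻ x in ball z ρ, (‖b₀ x - bmoAvg b₀ z ρ‖₊ : ℝ≥0∞) ^ p =
      ∫⁻ x in ball z ρ, (‖b x - bmoAvg b z ρ‖₊ : ℝ≥0∞) ^ p := by
    rw [bmoAvg_congr hae z ρ]
    refine lintegral_congr_ae ?_
    filter_upwards [ae_restrict_of_ae hae] with x hx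
    rw [hx]
  rw [hLHS, bmoNorm_congr hae]
  clear hLHS hae hb₀
  -- now b is measurable
  by_cases h0 : bmoNorm b = 0
  · have hJ0 : J b (ball z ρ) (bmoAvg b z ρ) = 0 :=
      le_antisymm (by simpa [h0] using bmo_ball (b := b) z hρ) (zero_le')
    have hae0 : ∀ᵐ x ∂(volume.restrict (ball z ρ)), (‖b x - bmoAvg b z ρ‖₊ : ℝ≥0∞) = 0 := by
      rw [J] at hJ0
      exact (lintegral_eq_zero_iff (hmeas.sub measurable_const).enorm).mp hJ0
    have hz : ∫⁻ x in ball z ρ, (‖b x - bmoAvg b z ρ‖₊ : ℝ≥0∞) ^ p = 0 := by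
      have : (fun x => (‖b x - bmoAvg b z ρ‖₊ : ℝ≥0∞) ^ p) =ᵐ[volume.restrict (ball z ρ)]
          (fun _ => 0) := by
        filter_upwards [hae0] with x hx
        rw [hx, ENNReal.zero_rpow_of_pos (by linarith)]
      rw [lintegral_congr_ae this, lintegral_zero]
    rw [hz]
    exact zero_le'
  by_cases htop : bmoNorm b = ⊤
  · rw [htop, ENNReal.top_rpow_of_pos (by linarith : (0:ℝ) < p), ENNReal.mul_top (by simp),
      ENNReal.top_mul (vol_pos z hρ)]
    exact le_top
  · set t := (bmoNorm b).toReal with hT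
    have htpos : 0 < t := ENNReal.toReal_pos h0 htop
    set b' : Rn n → ℝ := fun x => t⁻¹ * b x with hb'def
    have hb'loc : LocallyIntegrable b' volume := by
      exact hb.smul t⁻¹
    have hb'meas : Measurable b' := hmeas.const_mul t⁻¹
    have hnorm' : bmoNorm b' = 1 := by
      rw [hb'def, bmoNorm_smul b (inv_nonneg.mpr htpos.le),
        show bmoNorm b = ENNReal.ofReal t from (ENNReal.ofReal_toReal htop).symm,
        ← ENNReal.ofReal_mul (inv_nonneg.mpr htpos.le), inv_mul_cancel₀ htpos.ne']
      simp
    have hkey := JN_norm hn hb'loc hb'meas (le_of_eq hnorm') hp z hρ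
    have hc' : bmoAvg b' z ρ = t⁻¹ * bmoAvg b z ρ := bmoAvg_smul b t⁻¹ z ρ
    have hpt : ∀ x, (‖b x - bmoAvg b z ρ‖₊ : ℝ≥0∞) ^ p =
        ENNReal.ofReal (t^p) * (‖b' x - bmoAvg b' z ρ‖₊ : ℝ≥0∞) ^ p := by
      intro x
      rw [hc', hb'def]
      have hxx : b x - bmoAvg b z ρ = t * (t⁻¹ * b x - t⁻¹ * bmoAvg b z ρ) := by
        field_simp
      rw [hxx, Real.ennnorm_eq_ofReal_abs, abs_mul, abs_of_pos htpos,
        ENNReal.ofReal_mul htpos.le,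
        ENNReal.mul_rpow_of_nonneg _ _ (by linarith : (0:ℝ) ≤ p),
        ENNReal.ofReal_rpow_of_nonneg htpos.le (by linarith : (0:ℝ) ≤ p),
        ← Real.ennnorm_eq_ofReal_abs]
    rw [lintegral_congr fun x => hpt x, lintegral_const_mul' _ _ ENNReal.ofReal_ne_top]
    have hofreal : ENNReal.ofReal (t^p) = bmoNorm b ^ p := by
      rw [← ENNReal.ofReal_rpow_of_nonneg htpos.le (by linarith : (0:ℝ) ≤ p),
        ENNReal.ofReal_toReal htop]
    calc ENNReal.ofReal (t^p) * ∫⁻ x in ball z ρ, (‖b' x - bmoAvg b' z ρ‖₊ : ℝ≥0∞) ^ p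
        ≤ ENNReal.ofReal (t^p) * (Cp n p * volume (ball z ρ)) := mul_le_mul_right hkey _
    _ = (Cp n p * bmoNorm b ^ p) * volume (ball z ρ) := by rw [hofreal]; ring
    _ ≤ ((Cp n p + 1) * bmoNorm b ^ p) * volume (ball z ρ) := by
        gcongr
        exact le_self_add

end JN

/-- weighted John–Nirenberg type bound for `μ ∈ RH_r`. -/
theorem stmt4 (n : ℕ) (hn : 0 < n) (q r : ℝ) (hq : 1 < q) (hr : 1 < r)
    (A : ℝ≥0∞) (hA : A ≠ ⊤) :
    ∃ C : ℝ≥0∞, 0 < C ∧ C ≠ ⊤ ∧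
      ∀ μ : Rn n → ℝ≥0∞, IsRH r A μ →
        ∀ b : Rn n → ℝ, MeasureTheory.LocallyIntegrable b volume →
          ∀ (z : Rn n) (ρ : ℝ), 0 < ρ →
            (∫⁻ x in ball z ρ, (‖b x - bmoAvg b z ρ‖₊ : ℝ≥0∞) ^ q * μ x) ^ (1 / q) ≤
              C * bmoNorm b * (wInt μ z ρ) ^ (1 / q) := by
  have hr1 : (0:ℝ) < r - 1 := by linarith
  set s := r / (r - 1) with hsdef
  have hs1 : 1 < s := by
    rw [hsdef, lt_div_iff₀ hr1]
    linarith
  set p := q * s with hpdef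
  have hp1 : 1 ≤ p := by nlinarith
  obtain ⟨C₁, hC₁, hJN⟩ := JN.JN_final (n := n) hn hp1
  have hinv_s : 1/s = 1 - 1/r := by
    rw [hsdef]
    field_simp
  have hsnn : (0:ℝ) ≤ 1/s := by positivity
  refine ⟨(C₁ ^ (1/s) * A) ^ (1/q) + 1, ?_, ?_, ?_⟩
  · exact lt_of_lt_of_le zero_lt_one le_add_self
  · refine ENNReal.add_ne_top.mpr ⟨?_, ENNReal.one_ne_top⟩
    exact ENNReal.rpow_ne_top_of_nonneg (by positivity)
      (ENNReal.mul_ne_top (ENNReal.rpow_ne_top_of_nonneg hsnn hC₁) hA)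
  intro μ hRH b hb z ρ hρ
  set c := bmoAvg b z ρ with hc
  set B := ball z ρ with hB
  set F : Rn n → ℝ≥0∞ := fun x => (‖b x - c‖₊ : ℝ≥0∞) ^ q with hF
  obtain ⟨φ, hφmeas, hφle, hφeq⟩ :=
    exists_measurable_le_lintegral_eq (volume.restrict B) (fun x => F x * μ x)
  set ν : Rn n → ℝ≥0∞ := fun x => φ x / F x with hν
  have hFx_netop : ∀ x, F x ≠ ⊤ := fun x =>
    ENNReal.rpow_ne_top_of_nonneg (by linarith) ENNReal.coe_ne_top
  have hνle : ∀ x, ν x ≤ μ x := by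
    intro x
    by_cases hx : F x = 0
    · have hφ0 : φ x = 0 := le_antisymm (by simpa [hx] using hφle x) (zero_le')
      simp [hν, hφ0]
    · rw [hν]
      simp only
      rw [ENNReal.div_le_iff hx (hFx_netop x)]
      exact (hφle x).trans (le_of_eq (mul_comm _ _))
  have hφFν : ∀ x, φ x ≤ F x * ν x := by
    intro x
    by_cases hx : F x = 0
    · have hφ0 : φ x = 0 := le_antisymm (by simpa [hx] using hφle x) (zero_le')
      simp [hφ0]
    · rw [hν]
      simp only
      rw [ENNReal.mul_div_cancel hx (hFx_netop x)]
  have hbae : AEMeasurable b (volume.restrict B) :=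
    hb.aestronglyMeasurable.aemeasurable.restrict
  have hFae : AEMeasurable F (volume.restrict B) :=
    ((hbae.sub aemeasurable_const).enorm).pow aemeasurable_const
  have hνae : AEMeasurable ν (volume.restrict B) := hφmeas.aemeasurable.div hFae
  have hpq : s.HolderConjugate r := by
    rw [Real.holderConjugate_comm]
    exact Real.HolderConjugate.conjExponent hr
  have holder := ENNReal.lintegral_mul_le_Lp_mul_Lq (volume.restrict B) hpq hFae hνae
  have h1 : ∫⁻ x in B, F x * μ x ≤
      (∫⁻ x in B, F x ^ s) ^ (1/s) * (∫⁻ x in B, ν x ^ r) ^ (1/r) := by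
    calc ∫⁻ x in B, F x * μ x = ∫⁻ x in B, φ x := hφeq
    _ ≤ ∫⁻ x in B, F x * ν x := lintegral_mono hφFν
    _ = ∫⁻ x in B, (F * ν) x := by rfl
    _ ≤ _ := holder
  have hFr : ∀ x, F x ^ s = (‖b x - c‖₊ : ℝ≥0∞) ^ p := by
    intro x
    rw [hF]
    simp only
    rw [← ENNReal.rpow_mul]
  have h2 : ∫⁻ x in B, F x ^ s ≤ (C₁ * bmoNorm b ^ p) * volume B := by
    rw [lintegral_congr fun x => hFr x]
    exact hJN b hb z ρ hρ
  have h3 : ∫⁻ x in B, ν x ^ r ≤ ∫⁻ x in B, μ x ^ r :=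
    lintegral_mono fun x => ENNReal.rpow_le_rpow (hνle x) (by linarith)
  have hV0 : volume B ≠ 0 := JN.vol_pos z hρ
  have hVtop : volume B ≠ ⊤ := JN.vol_ne_top z ρ
  have h4 : (∫⁻ x in B, μ x ^ r) ^ (1/r) ≤ A * wInt μ z ρ * volume B ^ (1/r - 1) := by
    have hRH' := hRH z ρ hρ
    set X := ∫⁻ x in B, μ x ^ r with hX
    set W := wInt μ z ρ with hW
    have hXV : X ^ (1/r) = (X / volume B) ^ (1/r) * volume B ^ (1/r) := by
      rw [← ENNReal.mul_rpow_of_nonneg _ _ (by positivity : (0:ℝ) ≤ 1/r),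
        ENNReal.div_mul_cancel hV0 hVtop]
    rw [hXV]
    calc (X / volume B) ^ (1/r) * volume B ^ (1/r)
        ≤ (A * (W / volume B)) * volume B ^ (1/r) := mul_le_mul_left hRH' _
    _ = A * W * (volume B ^ (1/r) * (volume B)⁻¹) := by
        rw [ENNReal.div_eq_inv_mul]
        ring
    _ = A * W * volume B ^ (1/r - 1) := by
        rw [ENNReal.rpow_sub _ _ hV0 hVtop, ENNReal.rpow_one, ENNReal.div_eq_inv_mul]
        ring
  have h5 : ∫⁻ x in B, F x * μ x ≤ (C₁ ^ (1/s) * A) * (bmoNorm b ^ q * wInt μ z ρ) := by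
    calc ∫⁻ x in B, F x * μ x
        ≤ (∫⁻ x in B, F x ^ s) ^ (1/s) * (∫⁻ x in B, ν x ^ r) ^ (1/r) := h1
    _ ≤ ((C₁ * bmoNorm b ^ p) * volume B) ^ (1/s) *
          (A * wInt μ z ρ * volume B ^ (1/r - 1)) := by
        refine mul_le_mul' (ENNReal.rpow_le_rpow h2 hsnn) ?_
        exact le_trans (ENNReal.rpow_le_rpow h3 (by positivity)) h4
    _ = (C₁ ^ (1/s) * bmoNorm b ^ q * volume B ^ (1/s)) *
          (A * wInt μ z ρ * volume B ^ (1/r - 1)) := by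
        rw [ENNReal.mul_rpow_of_nonneg _ _ hsnn, ENNReal.mul_rpow_of_nonneg _ _ hsnn,
          ← ENNReal.rpow_mul (bmoNorm b) p (1/s),
          show p * (1/s) = q by
            rw [hpdef]
            field_simp]
    _ = (C₁ ^ (1/s) * A) * (bmoNorm b ^ q * wInt μ z ρ) *
          (volume B ^ (1/s) * volume B ^ (1/r - 1)) := by ring
    _ = (C₁ ^ (1/s) * A) * (bmoNorm b ^ q * wInt μ z ρ) := by
        rw [← ENNReal.rpow_add _ _ hV0 hVtop,
          show 1/s + (1/r - 1) = 0 by rw [hinv_s]; ring,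
          ENNReal.rpow_zero, mul_one]
  have hq0 : (0:ℝ) < 1/q := by positivity
  calc (∫⁻ x in B, (‖b x - c‖₊ : ℝ≥0∞) ^ q * μ x) ^ (1/q)
      = (∫⁻ x in B, F x * μ x) ^ (1/q) := by rfl
  _ ≤ ((C₁ ^ (1/s) * A) * (bmoNorm b ^ q * wInt μ z ρ)) ^ (1/q) :=
      ENNReal.rpow_le_rpow h5 hq0.le
  _ = (C₁ ^ (1/s) * A) ^ (1/q) * (bmoNorm b * wInt μ z ρ ^ (1/q)) := by
      rw [ENNReal.mul_rpow_of_nonneg (C₁ ^ (1/s) * A) (bmoNorm b ^ q * wInt μ z ρ) hq0.le,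
        ENNReal.mul_rpow_of_nonneg (bmoNorm b ^ q) (wInt μ z ρ) hq0.le,
        ← ENNReal.rpow_mul (bmoNorm b) q (1/q),
        show q * (1/q) = 1 by field_simp, ENNReal.rpow_one]
  _ ≤ ((C₁ ^ (1/s) * A) ^ (1/q) + 1) * bmoNorm b * wInt μ z ρ ^ (1/q) := by
      rw [mul_assoc]
      exact mul_le_mul_left le_self_add _
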